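/- Let G be a finite simple graph that is P4-free (i.e., G contains no four distinct vertices a, b, c, d such that ab, bc, cd are edges and ac, ad, bd are non-edges) and in which every connected component has an even number of vertices. Then V(G) can be partitioned into three (possibly empty) odd sets; in particular the odd chromatic number of G is at most 3. -/

import Mathlib

set_option linter.unusedSectionVars false

open Set

namespace OddPart

variable {V : Type*} [Fintype V] {G : SimpleGraph V}




def P4F (G : SimpleGraph V) : Prop := ∀ a b c d : V, a ≠ b → a ≠ c → a ≠ d → b ≠ c → b ≠ d → c ≠ d →
      G.Adj a b → G.Adj b c → G.Adj c d →
      ¬ G.Adj a c → ¬ G.Adj a d → ¬ G.Adj b d → False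


/-- inner claim, no-cross case: if S,T have no cross edges, v∉S∪T has a neighbor b∈T,
then inside S, non-neighbors of v have no edges to neighbors of v. -/
lemma inner_nc (hP4 : P4F G) {S T : Set V} {v b : V}
    (hdis : ∀ x ∈ S, x ∉ T) (hST : ∀ a ∈ S, ∀ c ∈ T, ¬ G.Adj a c)
    (hb : b ∈ T) (hvb : G.Adj v b) (hvS : v ∉ S) :
    ∀ y ∈ S, ¬ G.Adj v y → ∀ a ∈ S, G.Adj v a → ¬ G.Adj y a := by
  intro y hy hvy a ha hva hya
  exact hP4 y a v b hya.ne (fun h => hvS (h ▸ hy)) (fun h => hdis y hy (h ▸ hb))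
    (fun h => hvS (h ▸ ha)) (fun h => hdis a ha (h ▸ hb)) hvb.ne
    hya hva.symm hvb (fun h => hvy h.symm) (hST y hy b hb) (hST a ha b hb)

/-- inner claim, all-cross case: if S,T have all cross edges, v∉S∪T has a non-neighbor b∈T,
then inside S, neighbors of v are adjacent to non-neighbors of v. -/
lemma inner_ac (hP4 : P4F G) {S T : Set V} {v b : V}
    (hdis : ∀ x ∈ S, x ∉ T) (hST : ∀ a ∈ S, ∀ c ∈ T, G.Adj a c)
    (hb : b ∈ T) (hvb : ¬ G.Adj v b) (hvS : v ∉ S) (hvT : v ∉ T) :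
    ∀ y ∈ S, G.Adj v y → ∀ a ∈ S, ¬ G.Adj v a → G.Adj y a := by
  intro y hy hvy a ha hva
  by_contra hya
  exact hP4 v y b a hvy.ne (fun h => hvT (h ▸ hb)) (fun h => hvS (h ▸ ha))
    (fun h => hdis y hy (h ▸ hb)) (fun h => hva (h ▸ hvy)) (Ne.symm (fun h => hdis a ha (h ▸ hb)))
    hvy (hST y hy b hb) (hST a ha b hb).symm hvb hva hya

/-- Seinsche: a P4-free graph restricted to a set U with at least 2 elements splits. -/
lemma seinsche (hP4 : P4F G) : ∀ (n : ℕ) (U : Set V), U.ncard = n → 2 ≤ n →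
    ∃ S : Set V, S ⊆ U ∧ S.Nonempty ∧ (U \ S).Nonempty ∧
      ((∀ a ∈ S, ∀ b ∈ U \ S, ¬ G.Adj a b) ∨ (∀ a ∈ S, ∀ b ∈ U \ S, G.Adj a b)) := by
  intro n
  induction n using Nat.strong_induction_on with
  | _ n ih =>
  intro U hU hn
  rcases Nat.lt_or_ge n 3 with h3 | h3
  · -- n = 2
    have h2 : U.ncard = 2 := by omega
    rw [Set.ncard_eq_two] at h2
    obtain ⟨a, b, hab, rfl⟩ := h2
    refine ⟨{a}, by simp, ⟨a, rfl⟩, ⟨b, by simp [hab.symm]⟩, ?_⟩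
    by_cases hadj : G.Adj a b
    · right
      rintro x rfl y ⟨hy, hy2⟩
      have : y = b := by
        rcases hy with rfl | rfl
        · exact absurd rfl hy2
        · rfl
      subst this; exact hadj
    · left
      rintro x rfl y ⟨hy, hy2⟩
      have : y = b := by
        rcases hy with rfl | rfl
        · exact absurd rfl hy2
        · rfl
      subst this; exact hadj
  · -- n ≥ 3 : pick v ∈ U
    have hUne : U.Nonempty := by
      rw [← Set.ncard_pos U.toFinite]; omega
    obtain ⟨v, hv⟩ := hUne
    set U' : Set V := U \ {v} with hU'def
    have hvU' : v ∉ U' := by simp [hU'def]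
    have hU'card : U'.ncard = n - 1 := by
      rw [hU'def]
      have := Set.ncard_diff_singleton_of_mem hv
      omega
    obtain ⟨S', hS'U, hS'ne, hT'ne, hcross⟩ := ih (n-1) (by omega) U' hU'card (by omega)
    set T' : Set V := U' \ S' with hT'def
    have hsub : ∀ x ∈ S', x ∈ U ∧ x ≠ v := fun x hx => ⟨(hS'U hx).1, by
      intro h; exact (hS'U hx).2 (by simp [h])⟩
    have htsub : ∀ x ∈ T', x ∈ U ∧ x ≠ v := fun x hx => ⟨hx.1.1, by
      intro h; exact hx.1.2 (by simp [h])⟩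
    have hdisST : ∀ x ∈ S', x ∉ T' := fun x hx hx' => hx'.2 hx
    have hdisTS : ∀ x ∈ T', x ∉ S' := fun x hx => hx.2
    have hvS' : v ∉ S' := fun h => (hsub v h).2 rfl
    have hvT' : v ∉ T' := fun h => (htsub v h).2 rfl
    have hUsplit : ∀ x ∈ U, x = v ∨ x ∈ S' ∨ x ∈ T' := by
      intro x hx
      by_cases hxv : x = v
      · exact Or.inl hxv
      · by_cases hxS : x ∈ S'
        · exact Or.inr (Or.inl hxS)
        · exact Or.inr (Or.inr ⟨⟨hx, by simp [hxv]⟩, hxS⟩)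
    rcases hcross with hnc | hac
    · -- no cross edges between S' and T'
      by_cases hvN : ∀ c ∈ S', ¬ G.Adj v c
      · refine ⟨S', fun x hx => (hsub x hx).1, hS'ne, ⟨v, hv, hvS'⟩, Or.inl ?_⟩
        intro a ha c hc
        rcases hUsplit c hc.1 with rfl | hcS | hcT
        · exact fun h => hvN a ha h.symm
        · exact absurd hcS hc.2
        · exact hnc a ha c hcT
      by_cases hvN2 : ∀ c ∈ T', ¬ G.Adj v c
      · refine ⟨T', fun x hx => (htsub x hx).1, hT'ne, ⟨v, hv, hvT'⟩, Or.inl ?_⟩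
        intro a ha c hc
        rcases hUsplit c hc.1 with rfl | hcS | hcT
        · exact fun h => hvN2 a ha h.symm
        · exact fun h => hnc c hcS a ha h.symm
        · exact absurd hcT hc.2
      push_neg at hvN hvN2
      obtain ⟨a0, ha0, hva0⟩ := hvN
      obtain ⟨b0, hb0, hvb0⟩ := hvN2
      by_cases hall : ∀ x ∈ U', G.Adj v x
      · refine ⟨{v}, by simpa using hv, ⟨v, rfl⟩, ?_, Or.inr ?_⟩
        · obtain ⟨y, hy⟩ := hS'ne
          exact ⟨y, (hsub y hy).1, by simp [(hsub y hy).2]⟩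
        · rintro x rfl c hc
          exact hall c ⟨hc.1, by simpa using hc.2⟩
      · push_neg at hall
        obtain ⟨x0, hx0, hvx0⟩ := hall
        have key : ∀ (S T : Set V) (b : V), (∀ x ∈ S, x ∉ T) → (∀ x ∈ S, x ∈ U ∧ x ≠ v) →
            (∀ x ∈ T, x ∈ U ∧ x ≠ v) →
            (∀ p ∈ S, ∀ c ∈ T, ¬ G.Adj p c) → b ∈ T → G.Adj v b →
            (∀ x ∈ U, x = v ∨ x ∈ S ∨ x ∈ T) →
            ∀ x ∈ S, ¬ G.Adj v x →
            ∃ S₀ : Set V, S₀ ⊆ U ∧ S₀.Nonempty ∧ (U \ S₀).Nonempty ∧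
            ((∀ p ∈ S₀, ∀ c ∈ U \ S₀, ¬ G.Adj p c) ∨ (∀ p ∈ S₀, ∀ c ∈ U \ S₀, G.Adj p c)) := by
          intro S T b hdis hsb htb hnc' hbT hvb hsplit x hxS hvx
          have hvS : v ∉ S := fun h => (hsb v h).2 rfl
          refine ⟨{y ∈ S | ¬ G.Adj v y}, fun y hy => (hsb y hy.1).1, ⟨x, hxS, hvx⟩,
            ⟨v, hv, fun h => hvS h.1⟩, Or.inl ?_⟩
          rintro y ⟨hyS, hyv⟩ c hc
          rcases hsplit c hc.1 with rfl | hcS | hcT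
          · exact fun h => hyv h.symm
          · have hvc : G.Adj v c := by
              by_contra hcon
              exact hc.2 ⟨hcS, hcon⟩
            exact inner_nc hP4 hdis hnc' hbT hvb hvS y hyS hyv c hcS hvc
          · exact hnc' y hyS c hcT
        rcases hUsplit x0 hx0.1 with rfl | hxS | hxT
        · exact absurd rfl hx0.2.elim
        · exact key S' T' b0 hdisST hsub htsub hnc hb0 hvb0 hUsplit x0 hxS hvx0
        · exact key T' S' a0 hdisTS htsub hsub (fun p hp c hc h => hnc c hc p hp h.symm)
            ha0 hva0 (fun y hy => (hUsplit y hy).imp id Or.symm) x0 hxT hvx0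
    · -- all cross edges between S' and T'
      by_cases hvN : ∀ c ∈ S', G.Adj v c
      · refine ⟨S', fun x hx => (hsub x hx).1, hS'ne, ⟨v, hv, hvS'⟩, Or.inr ?_⟩
        intro a ha c hc
        rcases hUsplit c hc.1 with rfl | hcS | hcT
        · exact (hvN a ha).symm
        · exact absurd hcS hc.2
        · exact hac a ha c hcT
      by_cases hvN2 : ∀ c ∈ T', G.Adj v c
      · refine ⟨T', fun x hx => (htsub x hx).1, hT'ne, ⟨v, hv, hvT'⟩, Or.inr ?_⟩
        intro a ha c hc
        rcases hUsplit c hc.1 with rfl | hcS | hcT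
        · exact (hvN2 a ha).symm
        · exact (hac c hcS a ha).symm
        · exact absurd hcT hc.2
      push_neg at hvN hvN2
      obtain ⟨a0, ha0, hva0⟩ := hvN
      obtain ⟨b0, hb0, hvb0⟩ := hvN2
      by_cases hall : ∀ x ∈ U', ¬ G.Adj v x
      · refine ⟨{v}, by simpa using hv, ⟨v, rfl⟩, ?_, Or.inl ?_⟩
        · obtain ⟨y, hy⟩ := hS'ne
          exact ⟨y, (hsub y hy).1, by simp [(hsub y hy).2]⟩
        · rintro x rfl c hc
          exact hall c ⟨hc.1, by simpa using hc.2⟩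
      · push_neg at hall
        obtain ⟨x0, hx0, hvx0⟩ := hall
        have key : ∀ (S T : Set V) (b : V), (∀ x ∈ S, x ∉ T) → (∀ x ∈ S, x ∈ U ∧ x ≠ v) →
            (∀ x ∈ T, x ∈ U ∧ x ≠ v) →
            (∀ p ∈ S, ∀ c ∈ T, G.Adj p c) → b ∈ T → ¬ G.Adj v b →
            (∀ x ∈ U, x = v ∨ x ∈ S ∨ x ∈ T) →
            ∀ x ∈ S, G.Adj v x →
            ∃ S₀ : Set V, S₀ ⊆ U ∧ S₀.Nonempty ∧ (U \ S₀).Nonempty ∧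
            ((∀ p ∈ S₀, ∀ c ∈ U \ S₀, ¬ G.Adj p c) ∨ (∀ p ∈ S₀, ∀ c ∈ U \ S₀, G.Adj p c)) := by
          intro S T b hdis hsb htb hac' hbT hvb hsplit x hxS hvx
          have hvS : v ∉ S := fun h => (hsb v h).2 rfl
          have hvT : v ∉ T := fun h => (htb v h).2 rfl
          refine ⟨{y ∈ S | G.Adj v y}, fun y hy => (hsb y hy.1).1, ⟨x, hxS, hvx⟩,
            ⟨v, hv, fun h => hvS h.1⟩, Or.inr ?_⟩
          rintro y ⟨hyS, hyv⟩ c hc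
          rcases hsplit c hc.1 with rfl | hcS | hcT
          · exact hyv.symm
          · have hvc : ¬ G.Adj v c := fun hcon => hc.2 ⟨hcS, hcon⟩
            exact inner_ac hP4 hdis hac' hbT hvb hvS hvT y hyS hyv c hcS hvc
          · exact hac' y hyS c hcT
        rcases hUsplit x0 hx0.1 with rfl | hxS | hxT
        · exact absurd rfl hx0.2.elim
        · exact key S' T' b0 hdisST hsub htsub hac hb0 hvb0 hUsplit x0 hxS hvx0
        · exact key T' S' a0 hdisTS htsub hsub (fun p hp c hc => (hac c hc p hp).symm)
            ha0 hva0 (fun y hy => (hUsplit y hy).imp id Or.symm) x0 hxT hvx0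





/-- A set all of whose vertices have degree parity ε inside the set, and whose size has
parity p. -/
def USpec (G : SimpleGraph V) (A : Set V) (ε p : ZMod 2) : Prop :=
  (∀ v ∈ A, ((A ∩ G.neighborSet v).ncard : ZMod 2) = ε) ∧ (A.ncard : ZMod 2) = p


lemma uspec_empty (ε : ZMod 2) : USpec G ∅ ε 0 := by
  constructor
  · intro v hv; exact absurd hv (Set.notMem_empty v)
  · simp

lemma uspec_singleton (v : V) : USpec G {v} 0 1 := by
  constructor
  · intro w hw
    have hwv : w = v := hw
    subst hwv
    have h0 : ({w} : Set V) ∩ G.neighborSet w = ∅ := by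
      ext y
      simp only [Set.mem_inter_iff, Set.mem_singleton_iff, SimpleGraph.mem_neighborSet,
        Set.mem_empty_iff_false, iff_false, not_and]
      rintro rfl
      exact G.loopless.irrefl y
    rw [h0]; simp
  · simp

lemma ncard_union_par {A B : Set V} (h : Disjoint A B) :
    ((A ∪ B).ncard : ZMod 2) = (A.ncard : ZMod 2) + (B.ncard : ZMod 2) := by
  rw [Set.ncard_union_eq h A.toFinite B.toFinite]
  push_cast
  ring

/-- Combine specs across a split with no cross edges. -/
lemma combine_nc {S T A1 A2 : Set V} {ε q q' p : ZMod 2}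
    (hnc : ∀ a ∈ S, ∀ b ∈ T, ¬ G.Adj a b)
    (hA1 : A1 ⊆ S) (hA2 : A2 ⊆ T) (hd : Disjoint S T)
    (sp1 : USpec G A1 ε q) (sp2 : USpec G A2 ε q') (hq : q + q' = p) :
    USpec G (A1 ∪ A2) ε p := by
  constructor
  · intro v hv
    rcases hv with hv | hv
    · have he : (A1 ∪ A2) ∩ G.neighborSet v = A1 ∩ G.neighborSet v := by
        ext w
        simp only [Set.mem_inter_iff, Set.mem_union, SimpleGraph.mem_neighborSet]
        constructor
        · rintro ⟨hw | hw, hadj⟩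
          · exact ⟨hw, hadj⟩
          · exact absurd hadj (hnc v (hA1 hv) w (hA2 hw))
        · rintro ⟨hw, hadj⟩; exact ⟨Or.inl hw, hadj⟩
      rw [he]; exact sp1.1 v hv
    · have he : (A1 ∪ A2) ∩ G.neighborSet v = A2 ∩ G.neighborSet v := by
        ext w
        simp only [Set.mem_inter_iff, Set.mem_union, SimpleGraph.mem_neighborSet]
        constructor
        · rintro ⟨hw | hw, hadj⟩
          · exact absurd hadj.symm (hnc w (hA1 hw) v (hA2 hv))
          · exact ⟨hw, hadj⟩
        · rintro ⟨hw, hadj⟩; exact ⟨Or.inr hw, hadj⟩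
      rw [he]; exact sp2.1 v hv
  · rw [ncard_union_par (hd.mono hA1 hA2), sp1.2, sp2.2, hq]

/-- Combine specs across a split with all cross edges. -/
lemma combine_ac {S T A1 A2 : Set V} {ε1 ε2 q q' p ε : ZMod 2}
    (hac : ∀ a ∈ S, ∀ b ∈ T, G.Adj a b)
    (hA1 : A1 ⊆ S) (hA2 : A2 ⊆ T) (hd : Disjoint S T)
    (sp1 : USpec G A1 ε1 q) (sp2 : USpec G A2 ε2 q')
    (h1 : ε1 + q' = ε) (h2 : ε2 + q = ε) (hq : q + q' = p) :
    USpec G (A1 ∪ A2) ε p := by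
  constructor
  · intro v hv
    rcases hv with hv | hv
    · have he : (A1 ∪ A2) ∩ G.neighborSet v = (A1 ∩ G.neighborSet v) ∪ A2 := by
        ext w
        simp only [Set.mem_inter_iff, Set.mem_union, SimpleGraph.mem_neighborSet]
        constructor
        · rintro ⟨hw | hw, hadj⟩
          · exact Or.inl ⟨hw, hadj⟩
          · exact Or.inr hw
        · rintro (⟨hw, hadj⟩ | hw)
          · exact ⟨Or.inl hw, hadj⟩
          · exact ⟨Or.inr hw, hac v (hA1 hv) w (hA2 hw)⟩
      rw [he, ncard_union_par ((hd.mono hA1 hA2).mono_left Set.inter_subset_left),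
        sp1.1 v hv, sp2.2, h1]
    · have he : (A1 ∪ A2) ∩ G.neighborSet v = A1 ∪ (A2 ∩ G.neighborSet v) := by
        ext w
        simp only [Set.mem_inter_iff, Set.mem_union, SimpleGraph.mem_neighborSet]
        constructor
        · rintro ⟨hw | hw, hadj⟩
          · exact Or.inl hw
          · exact Or.inr ⟨hw, hadj⟩
        · rintro (hw | ⟨hw, hadj⟩)
          · exact ⟨Or.inl hw, (hac w (hA1 hw) v (hA2 hv)).symm⟩
          · exact ⟨Or.inr hw, hadj⟩
      rw [he, ncard_union_par ((hd.mono hA1 hA2).mono_right Set.inter_subset_left),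
        sp1.2, sp2.1 v hv]
      rw [← h2]; ring
  · rw [ncard_union_par (hd.mono hA1 hA2), sp1.2, sp2.2, hq]


set_option synthInstance.maxSize 10000 in
lemma sel_one : ∀ ε1 p1 ε2 p2 ε3 p3 : ZMod 2,
    ¬(ε1 = 1 ∧ p1 = 1) → ¬(ε2 = 1 ∧ p2 = 1) → ¬(ε3 = 1 ∧ p3 = 1) →
    ¬(ε1 = ε2 ∧ ε2 = ε3 ∧ p1 = p2 ∧ p2 = p3) → p1 + p2 + p3 = 1 →
    (ε1 = 0 ∧ p1 = 1 ∧ p2 = 0 ∧ p3 = 0) ∨ (ε2 = 0 ∧ p2 = 1 ∧ p1 = 0 ∧ p3 = 0) ∨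
    (ε3 = 0 ∧ p3 = 1 ∧ p1 = 0 ∧ p2 = 0) := by decide

set_option synthInstance.maxSize 10000 in
lemma sel1 : ∀ ε1 p1 ε2 p2 ε3 p3 s : ZMod 2,
    ¬(ε1 = 1 ∧ p1 = 1) → ¬(ε2 = 1 ∧ p2 = 1) → ¬(ε3 = 1 ∧ p3 = 1) →
    ¬(ε1 = ε2 ∧ ε2 = ε3 ∧ p1 = p2 ∧ p2 = p3) →
    ∃ q1 q2 q3 : ZMod 2, q1 + q2 + q3 = s ∧
      ¬(ε1 = 1 ∧ q1 = 1) ∧ ¬(ε2 = 1 ∧ q2 = 1) ∧ ¬(ε3 = 1 ∧ q3 = 1) ∧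
      ¬(ε1 = 1 ∧ p1 + q1 = 1) ∧ ¬(ε2 = 1 ∧ p2 + q2 = 1) ∧ ¬(ε3 = 1 ∧ p3 + q3 = 1) ∧
      ¬(ε1 = ε2 ∧ ε2 = ε3 ∧ q1 = q2 ∧ q2 = q3) ∧
      ¬(ε1 = ε2 ∧ ε2 = ε3 ∧ p1 + q1 = p2 + q2 ∧ p2 + q2 = p3 + q3) := by decide

set_option synthInstance.maxSize 10000 in
lemma sel2 : ∀ ε1 p1 ε2 p2 ε3 p3 s : ZMod 2,
    ¬(ε1 = 1 ∧ p1 = 1) → ¬(ε2 = 1 ∧ p2 = 1) → ¬(ε3 = 1 ∧ p3 = 1) →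
    ¬(ε1 = ε2 ∧ ε2 = ε3 ∧ p1 = p2 ∧ p2 = p3) →
    ∃ q1 q2 q3 : ZMod 2, q1 + q2 + q3 = s ∧
      ¬(ε1 + p1 + q1 = 1 ∧ q1 = 1) ∧ ¬(ε2 + p2 + q2 = 1 ∧ q2 = 1) ∧
      ¬(ε3 + p3 + q3 = 1 ∧ q3 = 1) ∧
      ¬(ε1 + q1 = 1 ∧ p1 + q1 = 1) ∧ ¬(ε2 + q2 = 1 ∧ p2 + q2 = 1) ∧
      ¬(ε3 + q3 = 1 ∧ p3 + q3 = 1) ∧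
      ¬(ε1 + p1 + q1 = ε2 + p2 + q2 ∧ ε2 + p2 + q2 = ε3 + p3 + q3 ∧ q1 = q2 ∧ q2 = q3) ∧
      ¬(ε1 + q1 = ε2 + q2 ∧ ε2 + q2 = ε3 + q3 ∧ p1 + q1 = p2 + q2 ∧ p2 + q2 = p3 + q3) := by
  decide

lemma zflip : ∀ a b c : ZMod 2, a + b = c → b = c + a := by decide

lemma zh1 : ∀ p q : ZMod 2, q + (p + q) = p := by decide
lemma zh2 : ∀ e p q : ZMod 2, (e + p + q) + (p + q) = e := by decide
lemma zh3 : ∀ e q : ZMod 2, (e + q) + q = e := by decide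

lemma disj4 {S T A1 A2 B1 B2 : Set V} (hdST : Disjoint S T) (hA1 : A1 ⊆ S) (hA2 : A2 ⊆ T)
    (hB1 : B1 ⊆ S) (hB2 : B2 ⊆ T) (d1 : Disjoint A1 B1) (d2 : Disjoint A2 B2) :
    Disjoint (A1 ∪ A2) (B1 ∪ B2) := by
  rw [Set.disjoint_union_left]
  constructor
  · rw [Set.disjoint_union_right]; exact ⟨d1, hdST.mono hA1 hB2⟩
  · rw [Set.disjoint_union_right]; exact ⟨(hdST.mono hB1 hA2).symm, d2⟩

lemma union3_eq {A1 B1 C1 A2 B2 C2 : Set V} :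
    (A1 ∪ A2) ∪ (B1 ∪ B2) ∪ (C1 ∪ C2) = (A1 ∪ B1 ∪ C1) ∪ (A2 ∪ B2 ∪ C2) := by
  ext x
  simp only [Set.mem_union]
  tauto

lemma lemA (hP4 : P4F G) : ∀ (n : ℕ) (U : Set V), U.ncard = n → U.Nonempty →
    ∀ ε1 p1 ε2 p2 ε3 p3 : ZMod 2,
    p1 + p2 + p3 = (U.ncard : ZMod 2) →
    ¬(ε1 = 1 ∧ p1 = 1) → ¬(ε2 = 1 ∧ p2 = 1) → ¬(ε3 = 1 ∧ p3 = 1) →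
    ¬(ε1 = ε2 ∧ ε2 = ε3 ∧ p1 = p2 ∧ p2 = p3) →
    ∃ A B C : Set V, A ∪ B ∪ C = U ∧ Disjoint A B ∧ Disjoint A C ∧ Disjoint B C ∧
      USpec G A ε1 p1 ∧ USpec G B ε2 p2 ∧ USpec G C ε3 p3 := by
  intro n
  induction n using Nat.strong_induction_on with
  | _ n ih =>
  intro U hU hUne ε1 p1 ε2 p2 ε3 p3 hsum h1 h2 h3 hne
  rw [hU] at hsum
  have hpos : 1 ≤ n := by
    have := (Set.ncard_pos U.toFinite).mpr hUne; omega
  rcases Nat.lt_or_ge n 2 with hlt | hge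
  · -- n = 1
    have hone : U.ncard = 1 := by omega
    obtain ⟨v, rfl⟩ := Set.ncard_eq_one.mp hone
    have hn1 : (n : ZMod 2) = 1 := by
      have : n = 1 := by omega
      rw [this]; norm_num
    rw [hn1] at hsum
    rcases sel_one ε1 p1 ε2 p2 ε3 p3 h1 h2 h3 hne hsum with
      ⟨he, hp1, hp2, hp3⟩ | ⟨he, hp1, hp2, hp3⟩ | ⟨he, hp1, hp2, hp3⟩
    · subst he; subst hp1; subst hp2; subst hp3
      exact ⟨{v}, ∅, ∅, by simp, by simp, by simp, by simp,
        uspec_singleton v, uspec_empty ε2, uspec_empty ε3⟩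
    · subst he; subst hp1; subst hp2; subst hp3
      exact ⟨∅, {v}, ∅, by simp, by simp, by simp, by simp,
        uspec_empty ε1, uspec_singleton v, uspec_empty ε3⟩
    · subst he; subst hp1; subst hp2; subst hp3
      exact ⟨∅, ∅, {v}, by simp, by simp, by simp, by simp,
        uspec_empty ε1, uspec_empty ε2, uspec_singleton v⟩
  · -- n ≥ 2
    obtain ⟨S, hSU, hSne, hTne, hcross⟩ := seinsche hP4 n U hU hge
    set T := U \ S with hTdef
    have hdST : Disjoint S T := Set.disjoint_sdiff_right
    have hST : S ∪ T = U := Set.union_diff_cancel hSU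
    have hsumST : S.ncard + T.ncard = n := by
      rw [← hU, ← hST, Set.ncard_union_eq hdST S.toFinite T.toFinite]
    have hSpos : 1 ≤ S.ncard := (Set.ncard_pos S.toFinite).mpr hSne
    have hTpos : 1 ≤ T.ncard := (Set.ncard_pos T.toFinite).mpr hTne
    have hSlt : S.ncard < n := by omega
    have hTlt : T.ncard < n := by omega
    have hTpar : (T.ncard : ZMod 2) = (n : ZMod 2) + (S.ncard : ZMod 2) := by
      have hc := congrArg (fun m : ℕ => (m : ZMod 2)) hsumST
      push_cast at hc
      exact zflip _ _ _ hc
    rcases hcross with hnc | hac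
    · -- no cross edges
      obtain ⟨q1, q2, q3, hq, b1, b2, b3, c1, c2, c3, d1, d2⟩ :=
        sel1 ε1 p1 ε2 p2 ε3 p3 (S.ncard : ZMod 2) h1 h2 h3 hne
      obtain ⟨A1, B1, C1, hU1, dAB1, dAC1, dBC1, sA1, sB1, sC1⟩ :=
        ih S.ncard hSlt S rfl hSne ε1 q1 ε2 q2 ε3 q3 hq b1 b2 b3 d1
      obtain ⟨A2, B2, C2, hU2, dAB2, dAC2, dBC2, sA2, sB2, sC2⟩ :=
        ih T.ncard hTlt T rfl hTne ε1 (p1 + q1) ε2 (p2 + q2) ε3 (p3 + q3)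
          (by rw [hTpar]; linear_combination hsum + hq) c1 c2 c3 d2
      have hA1S : A1 ⊆ S := by rw [← hU1]; exact fun x hx => Or.inl (Or.inl hx)
      have hB1S : B1 ⊆ S := by rw [← hU1]; exact fun x hx => Or.inl (Or.inr hx)
      have hC1S : C1 ⊆ S := by rw [← hU1]; exact fun x hx => Or.inr hx
      have hA2T : A2 ⊆ T := by rw [← hU2]; exact fun x hx => Or.inl (Or.inl hx)
      have hB2T : B2 ⊆ T := by rw [← hU2]; exact fun x hx => Or.inl (Or.inr hx)
      have hC2T : C2 ⊆ T := by rw [← hU2]; exact fun x hx => Or.inr hx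
      exact ⟨A1 ∪ A2, B1 ∪ B2, C1 ∪ C2,
        by rw [union3_eq, hU1, hU2, hST],
        disj4 hdST hA1S hA2T hB1S hB2T dAB1 dAB2,
        disj4 hdST hA1S hA2T hC1S hC2T dAC1 dAC2,
        disj4 hdST hB1S hB2T hC1S hC2T dBC1 dBC2,
        combine_nc hnc hA1S hA2T hdST sA1 sA2 (zh1 p1 q1),
        combine_nc hnc hB1S hB2T hdST sB1 sB2 (zh1 p2 q2),
        combine_nc hnc hC1S hC2T hdST sC1 sC2 (zh1 p3 q3)⟩
    · -- all cross edges
      obtain ⟨q1, q2, q3, hq, b1, b2, b3, c1, c2, c3, d1, d2⟩ :=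
        sel2 ε1 p1 ε2 p2 ε3 p3 (S.ncard : ZMod 2) h1 h2 h3 hne
      obtain ⟨A1, B1, C1, hU1, dAB1, dAC1, dBC1, sA1, sB1, sC1⟩ :=
        ih S.ncard hSlt S rfl hSne (ε1 + p1 + q1) q1 (ε2 + p2 + q2) q2 (ε3 + p3 + q3) q3
          hq b1 b2 b3 d1
      obtain ⟨A2, B2, C2, hU2, dAB2, dAC2, dBC2, sA2, sB2, sC2⟩ :=
        ih T.ncard hTlt T rfl hTne (ε1 + q1) (p1 + q1) (ε2 + q2) (p2 + q2) (ε3 + q3) (p3 + q3)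
          (by rw [hTpar]; linear_combination hsum + hq) c1 c2 c3 d2
      have hA1S : A1 ⊆ S := by rw [← hU1]; exact fun x hx => Or.inl (Or.inl hx)
      have hB1S : B1 ⊆ S := by rw [← hU1]; exact fun x hx => Or.inl (Or.inr hx)
      have hC1S : C1 ⊆ S := by rw [← hU1]; exact fun x hx => Or.inr hx
      have hA2T : A2 ⊆ T := by rw [← hU2]; exact fun x hx => Or.inl (Or.inl hx)
      have hB2T : B2 ⊆ T := by rw [← hU2]; exact fun x hx => Or.inl (Or.inr hx)
      have hC2T : C2 ⊆ T := by rw [← hU2]; exact fun x hx => Or.inr hx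
      exact ⟨A1 ∪ A2, B1 ∪ B2, C1 ∪ C2,
        by rw [union3_eq, hU1, hU2, hST],
        disj4 hdST hA1S hA2T hB1S hB2T dAB1 dAB2,
        disj4 hdST hA1S hA2T hC1S hC2T dAC1 dAC2,
        disj4 hdST hB1S hB2T hC1S hC2T dBC1 dBC2,
        combine_ac hac hA1S hA2T hdST sA1 sA2 (zh2 ε1 p1 q1) (zh3 ε1 q1) (zh1 p1 q1),
        combine_ac hac hB1S hB2T hdST sB1 sB2 (zh2 ε2 p2 q2) (zh3 ε2 q2) (zh1 p2 q2),
        combine_ac hac hC1S hC2T hdST sC1 sC2 (zh2 ε3 p3 q3) (zh3 ε3 q3) (zh1 p3 q3)⟩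
def RW (G : SimpleGraph V) (U : Set V) (a b : V) : Prop :=
  Relation.ReflTransGen (fun x y => x ∈ U ∧ y ∈ U ∧ G.Adj x y) a b

lemma rw_mem {U : Set V} {v w : V} (hv : v ∈ U) (h : RW G U v w) : w ∈ U := by
  induction h with
  | refl => exact hv
  | tail _ h _ => exact h.2.1

lemma rw_mono {U U' : Set V} (hUU : U ⊆ U') {v w : V} (h : RW G U v w) : RW G U' v w :=
  Relation.ReflTransGen.mono (r := fun x y => x ∈ U ∧ y ∈ U ∧ G.Adj x y) (fun x y hxy => ⟨hUU hxy.1, hUU hxy.2.1, hxy.2.2⟩) v w h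

lemma rw_restrict {U S : Set V} (hSU : S ⊆ U)
    (hnc : ∀ a ∈ S, ∀ b ∈ U \ S, ¬ G.Adj a b) {v w : V} (hv : v ∈ S) (h : RW G U v w) :
    w ∈ S ∧ RW G S v w := by
  induction h with
  | refl => exact ⟨hv, Relation.ReflTransGen.refl⟩
  | tail _ h ih =>
    rename_i b c _
    have hbS := ih.1
    have hcS : c ∈ S := by
      by_contra hc
      exact hnc b hbS c ⟨h.2.1, hc⟩ h.2.2
    exact ⟨hcS, ih.2.tail ⟨hbS, hcS, h.2.2⟩⟩

lemma zb1 : ∀ s : ZMod 2, s + (s + 1) + (s + 1) = s := by decide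
lemma zb2 : ∀ s : ZMod 2, ¬(1 + s = 1 ∧ s = 1) := by decide
lemma zb3 : ∀ s : ZMod 2, ¬(s = 1 ∧ s + 1 = 1) := by decide
lemma zb4 : ∀ s : ZMod 2, ¬(1 + s = s ∧ s = s ∧ s = s + 1 ∧ s + 1 = s + 1) := by decide
lemma zb5 : ∀ s : ZMod 2, (1 + s) + s = 1 := by decide
lemma zb6 : ∀ s : ZMod 2, s + (s + 1) = 1 := by decide
lemma zb7 : ∀ s : ZMod 2, s + s = 0 := by decide
lemma zb8 : ∀ s : ZMod 2, (s + 1) + (s + 1) = 0 := by decide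

lemma lemB (hP4 : P4F G) : ∀ (n : ℕ) (U : Set V), U.ncard = n →
    (∀ v ∈ U, Even {w | RW G U v w}.ncard) →
    ∃ A B C : Set V, A ∪ B ∪ C = U ∧ Disjoint A B ∧ Disjoint A C ∧ Disjoint B C ∧
      USpec G A 1 0 ∧ USpec G B 1 0 ∧ USpec G C 1 0 := by
  intro n
  induction n using Nat.strong_induction_on with
  | _ n ih =>
  intro U hU hev
  rcases Nat.eq_zero_or_pos n with h0 | hpos
  · have hUe : U = ∅ := (Set.ncard_eq_zero U.toFinite).mp (by omega)
    subst hUe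
    exact ⟨∅, ∅, ∅, by simp, by simp, by simp, by simp,
      uspec_empty 1, uspec_empty 1, uspec_empty 1⟩
  · obtain ⟨v, hv⟩ : U.Nonempty := (Set.ncard_pos U.toFinite).mp (by omega)
    have hge : 2 ≤ n := by
      have hsub : {w | RW G U v w} ⊆ U := fun w hw => rw_mem hv hw
      have h1 : 1 ≤ {w | RW G U v w}.ncard :=
        (Set.ncard_pos (Set.toFinite _)).mpr ⟨v, Relation.ReflTransGen.refl⟩
      have h2 := hev v hv
      have h3 : {w | RW G U v w}.ncard ≤ U.ncard := Set.ncard_le_ncard hsub U.toFinite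
      rcases h2 with ⟨k, hk⟩; omega
    obtain ⟨S, hSU, hSne, hTne, hcross⟩ := seinsche hP4 n U hU hge
    set T := U \ S with hTdef
    have hTU : T ⊆ U := Set.diff_subset
    have hdST : Disjoint S T := Set.disjoint_sdiff_right
    have hST : S ∪ T = U := Set.union_diff_cancel hSU
    have hsumST : S.ncard + T.ncard = n := by
      rw [← hU, ← hST, Set.ncard_union_eq hdST S.toFinite T.toFinite]
    have hSpos : 1 ≤ S.ncard := (Set.ncard_pos S.toFinite).mpr hSne
    have hTpos : 1 ≤ T.ncard := (Set.ncard_pos T.toFinite).mpr hTne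
    have hSlt : S.ncard < n := by omega
    have hTlt : T.ncard < n := by omega
    have hsplit : ∀ x ∈ U, x ∈ S ∨ x ∈ T := by
      intro x hx
      by_cases hxS : x ∈ S
      · exact Or.inl hxS
      · exact Or.inr ⟨hx, hxS⟩
    rcases hcross with hnc | hac
    · -- no cross edges
      have hncT : ∀ a ∈ T, ∀ b ∈ U \ T, ¬ G.Adj a b := by
        intro a ha b hb hadj
        have hbS : b ∈ S := by
          rw [hTdef, Set.diff_diff_cancel_left hSU] at hb
          exact hb
        exact hnc b hbS a ha hadj.symm
      have hevS : ∀ x ∈ S, Even {w | RW G S x w}.ncard := by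
        intro x hx
        have heq : {w | RW G S x w} = {w | RW G U x w} := by
          ext w
          exact ⟨fun h => rw_mono hSU h, fun h => (rw_restrict hSU hnc hx h).2⟩
        rw [heq]; exact hev x (hSU hx)
      have hevT : ∀ x ∈ T, Even {w | RW G T x w}.ncard := by
        intro x hx
        have heq : {w | RW G T x w} = {w | RW G U x w} := by
          ext w
          exact ⟨fun h => rw_mono hTU h, fun h => (rw_restrict hTU hncT hx h).2⟩
        rw [heq]; exact hev x (hTU hx)
      obtain ⟨A1, B1, C1, hU1, dAB1, dAC1, dBC1, sA1, sB1, sC1⟩ := ih S.ncard hSlt S rfl hevS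
      obtain ⟨A2, B2, C2, hU2, dAB2, dAC2, dBC2, sA2, sB2, sC2⟩ := ih T.ncard hTlt T rfl hevT
      have hA1S : A1 ⊆ S := by rw [← hU1]; exact fun x hx => Or.inl (Or.inl hx)
      have hB1S : B1 ⊆ S := by rw [← hU1]; exact fun x hx => Or.inl (Or.inr hx)
      have hC1S : C1 ⊆ S := by rw [← hU1]; exact fun x hx => Or.inr hx
      have hA2T : A2 ⊆ T := by rw [← hU2]; exact fun x hx => Or.inl (Or.inl hx)
      have hB2T : B2 ⊆ T := by rw [← hU2]; exact fun x hx => Or.inl (Or.inr hx)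
      have hC2T : C2 ⊆ T := by rw [← hU2]; exact fun x hx => Or.inr hx
      exact ⟨A1 ∪ A2, B1 ∪ B2, C1 ∪ C2,
        by rw [union3_eq, hU1, hU2, hST],
        disj4 hdST hA1S hA2T hB1S hB2T dAB1 dAB2,
        disj4 hdST hA1S hA2T hC1S hC2T dAC1 dAC2,
        disj4 hdST hB1S hB2T hC1S hC2T dBC1 dBC2,
        combine_nc hnc hA1S hA2T hdST sA1 sA2 (by decide),
        combine_nc hnc hB1S hB2T hdST sB1 sB2 (by decide),
        combine_nc hnc hC1S hC2T hdST sC1 sC2 (by decide)⟩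
    · -- all cross edges: U is connected, so n is even
      have hreach : ∀ a ∈ U, ∀ b ∈ U, RW G U a b := by
        intro a ha b hb
        rcases hsplit a ha with haS | haT <;> rcases hsplit b hb with hbS | hbT
        · obtain ⟨t, ht⟩ := hTne
          exact (Relation.ReflTransGen.single ⟨ha, hTU ht, hac a haS t ht⟩).tail
            ⟨hTU ht, hb, (hac b hbS t ht).symm⟩
        · exact Relation.ReflTransGen.single ⟨ha, hb, hac a haS b hbT⟩
        · exact Relation.ReflTransGen.single ⟨ha, hb, (hac b hbS a haT).symm⟩
        · obtain ⟨s, hs⟩ := hSne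
          exact (Relation.ReflTransGen.single ⟨ha, hSU hs, (hac s hs a haT).symm⟩).tail
            ⟨hSU hs, hb, hac s hs b hbT⟩
      have hUeven : Even n := by
        have heq : {w | RW G U v w} = U := by
          ext w
          exact ⟨fun h => rw_mem hv h, fun hw => hreach v hv w hw⟩
        rw [← hU, ← heq]
        exact hev v hv
      have hnpar : ((n : ℕ) : ZMod 2) = 0 := (ZMod.natCast_eq_zero_iff n 2).mpr
        (even_iff_two_dvd.mp hUeven)
      have hTpar : (T.ncard : ZMod 2) = (n : ZMod 2) + (S.ncard : ZMod 2) := by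
        have hc := congrArg (fun m : ℕ => (m : ZMod 2)) hsumST
        push_cast at hc
        exact zflip _ _ _ hc
      set s : ZMod 2 := (S.ncard : ZMod 2) with hs
      obtain ⟨A1, B1, C1, hU1, dAB1, dAC1, dBC1, sA1, sB1, sC1⟩ :=
        lemA hP4 S.ncard S rfl hSne (1 + s) s s (s + 1) s (s + 1)
          (zb1 s) (zb2 s) (zb3 s) (zb3 s) (zb4 s)
      obtain ⟨A2, B2, C2, hU2, dAB2, dAC2, dBC2, sA2, sB2, sC2⟩ :=
        lemA hP4 T.ncard T rfl hTne (1 + s) s s (s + 1) s (s + 1)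
          (by rw [hTpar, hnpar, zero_add]; exact zb1 s) (zb2 s) (zb3 s) (zb3 s) (zb4 s)
      have hA1S : A1 ⊆ S := by rw [← hU1]; exact fun x hx => Or.inl (Or.inl hx)
      have hB1S : B1 ⊆ S := by rw [← hU1]; exact fun x hx => Or.inl (Or.inr hx)
      have hC1S : C1 ⊆ S := by rw [← hU1]; exact fun x hx => Or.inr hx
      have hA2T : A2 ⊆ T := by rw [← hU2]; exact fun x hx => Or.inl (Or.inl hx)
      have hB2T : B2 ⊆ T := by rw [← hU2]; exact fun x hx => Or.inl (Or.inr hx)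
      have hC2T : C2 ⊆ T := by rw [← hU2]; exact fun x hx => Or.inr hx
      exact ⟨A1 ∪ A2, B1 ∪ B2, C1 ∪ C2,
        by rw [union3_eq, hU1, hU2, hST],
        disj4 hdST hA1S hA2T hB1S hB2T dAB1 dAB2,
        disj4 hdST hA1S hA2T hC1S hC2T dAC1 dAC2,
        disj4 hdST hB1S hB2T hC1S hC2T dBC1 dBC2,
        combine_ac hac hA1S hA2T hdST sA1 sA2 (zb5 s) (zb5 s) (zb7 s),
        combine_ac hac hB1S hB2T hdST sB1 sB2 (zb6 s) (zb6 s) (zb8 s),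
        combine_ac hac hC1S hC2T hdST sC1 sC2 (zb6 s) (zb6 s) (zb8 s)⟩
end OddPart

/-- A set `S` of vertices of `G` is *odd* if every vertex of `S` has an odd number of
neighbors inside `S`. -/
def SimpleGraph.IsOddSet {V : Type*} (G : SimpleGraph V) (S : Set V) : Prop :=
  ∀ v ∈ S, Odd (S ∩ G.neighborSet v).ncard

/-- If a finite graph `G` is `P₄`-free and every connected component of `G` has an even
number of vertices, then `V(G)` can be partitioned into three (possibly empty) odd sets;
in particular χ_odd(G) ≤ 3. -/
theorem stmt3 {V : Type*} [Fintype V] (G : SimpleGraph V)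
    (hP4 : ∀ a b c d : V, a ≠ b → a ≠ c → a ≠ d → b ≠ c → b ≠ d → c ≠ d →
      G.Adj a b → G.Adj b c → G.Adj c d →
      ¬ G.Adj a c → ¬ G.Adj a d → ¬ G.Adj b d → False)
    (hcomp : ∀ K : G.ConnectedComponent, Even K.supp.ncard) :
    ∃ A B C : Set V, Disjoint A B ∧ Disjoint A C ∧ Disjoint B C ∧
      A ∪ B ∪ C = Set.univ ∧ G.IsOddSet A ∧ G.IsOddSet B ∧ G.IsOddSet C := by
  classical
  have hP4' : OddPart.P4F G := hP4
  have hev : ∀ v ∈ (Set.univ : Set V), Even {w | OddPart.RW G Set.univ v w}.ncard := by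
    intro v _
    have heq : {w | OddPart.RW G Set.univ v w} = (G.connectedComponentMk v).supp := by
      ext w
      simp only [Set.mem_setOf_eq, SimpleGraph.ConnectedComponent.mem_supp_iff]
      constructor
      · intro h
        have hr : G.Reachable v w := by
          rw [SimpleGraph.reachable_iff_reflTransGen]
          exact Relation.ReflTransGen.mono (r := fun x y => x ∈ (Set.univ : Set V) ∧ y ∈ (Set.univ : Set V) ∧ G.Adj x y) (fun x y hxy => hxy.2.2) v w h
        exact SimpleGraph.ConnectedComponent.eq.mpr hr.symm
      · intro h
        have hr : G.Reachable v w := (SimpleGraph.ConnectedComponent.eq.mp h).symm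
        rw [SimpleGraph.reachable_iff_reflTransGen] at hr
        exact Relation.ReflTransGen.mono (r := G.Adj) (fun x y hxy => ⟨trivial, trivial, hxy⟩) v w hr
    rw [heq]
    exact hcomp _
  obtain ⟨A, B, C, hun, d1, d2, d3, sA, sB, sC⟩ :=
    OddPart.lemB hP4' (Set.univ : Set V).ncard Set.univ rfl hev
  refine ⟨A, B, C, d1, d2, d3, hun, ?_, ?_, ?_⟩
  · intro v hv
    exact ZMod.natCast_eq_one_iff_odd.mp (sA.1 v hv)
  · intro v hv
    exact ZMod.natCast_eq_one_iff_odd.mp (sB.1 v hv)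
  · intro v hv
    exact ZMod.natCast_eq_one_iff_odd.mp (sC.1 v hv)
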